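/- Let E be a directed graph and H ⊆ E^0 a hereditary subset. Form the graph _HE with vertex set (_HE)^0 := H ∪ F_E(H) and edge set (_HE)^1 := {e ∈ E^1 : s(e) ∈ H} ∪ {ᾱ : α ∈ F_E(H)}, where for α ∈ F_E(H) the edge ᾱ has source α and range r(α), and edges with source in H keep their source and range from E. Then no vertex of F_E(H) is the range of any edge of _HE, and consequently every closed path in _HE consists entirely of edges of E with source in H; in particular the closed paths of _HE are exactly the closed paths of E all of whose vertices lie in H. -/

import Mathlib

/-- A directed graph `E = (E⁰, E¹, r, s)`: `V` is the vertex set `E⁰`, `Edg` is the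
edge set `E¹`, and `s`, `r` give the source and range of each edge. -/
structure DGraph (V : Type*) (Edg : Type*) where
  s : Edg → V
  r : Edg → V

namespace DGraph

variable {V Edg : Type*}

/-- There is an edge from `v` to `w`. -/
def Adj (G : DGraph V Edg) (v w : V) : Prop := ∃ e, G.s e = v ∧ G.r e = w

/-- There is a path (possibly of length zero, i.e. a vertex) from `v` to `w`. -/
def Reaches (G : DGraph V Edg) : V → V → Prop := Relation.ReflTransGen G.Adj

/-- A subset `X ⊆ E⁰` is hereditary if `r(e) ∈ X` whenever `s(e) ∈ X`. -/
def Hereditary (G : DGraph V Edg) (X : Set V) : Prop := ∀ e, G.s e ∈ X → G.r e ∈ X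

/-- A vertex is a finite emitter if `s⁻¹(v)` is finite and nonempty. -/
def FiniteEmitter (G : DGraph V Edg) (v : V) : Prop :=
  {e | G.s e = v}.Finite ∧ {e | G.s e = v}.Nonempty

/-- A subset `X ⊆ E⁰` is saturated if every finite emitter `v` with
`r(s⁻¹(v)) ⊆ X` lies in `X`. -/
def Saturated (G : DGraph V Edg) (X : Set V) : Prop :=
  ∀ v, FiniteEmitter G v → (∀ e, G.s e = v → G.r e ∈ X) → v ∈ X

/-- The hereditary saturated closure of `X`: the smallest hereditary and saturated
subset of `E⁰` containing `X`. -/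
def satClosure (G : DGraph V Edg) (X : Set V) : Set V :=
  ⋂₀ {Y | Hereditary G Y ∧ Saturated G Y ∧ X ⊆ Y}

/-- The consecutive edges of a path match up: `r(eᵢ) = s(eᵢ₊₁)`. -/
def IsChain (G : DGraph V Edg) (p : List Edg) : Prop :=
  List.Chain' (fun e f => G.r e = G.s f) p

/-- `p` is a closed path (of length ≥ 1) based at `v`. -/
def IsClosedPathAt (G : DGraph V Edg) (p : List Edg) (v : V) : Prop :=
  ∃ hne : p ≠ [], IsChain G p ∧ G.s (p.head hne) = v ∧ G.r (p.getLast hne) = v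

/-- `p` is a closed path (of length ≥ 1). -/
def IsClosedPath (G : DGraph V Edg) (p : List Edg) : Prop := ∃ v, IsClosedPathAt G p v

/-- The vertex set `α⁰ = {s(e₁), …, s(eₙ)}` of a path. -/
def pathVerts (G : DGraph V Edg) (p : List Edg) : Set V := {w | ∃ e ∈ p, G.s e = w}

/-- An exit of a closed path `e₁⋯eₙ` is an edge `f` with `s(f) = s(eᵢ)` and
`f ≠ eᵢ` for some `i`. -/
def IsExitOf (G : DGraph V Edg) (f : Edg) (p : List Edg) : Prop :=
  ∃ e ∈ p, G.s f = G.s e ∧ f ≠ e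

/-- `p` is a simple closed path based at `v`: a closed path whose sources are
pairwise distinct. -/
def IsSimpleClosedPathAt (G : DGraph V Edg) (p : List Edg) (v : V) : Prop :=
  IsClosedPathAt G p v ∧ (p.map G.s).Nodup

end DGraph

/-- An element of `F_E(H)`: a path `α = e₁⋯eₙ` of length `n ≥ 1` with `s(α) ∉ H`,
`r(α) ∈ H`, and `r(eᵢ) ∉ H` for every `i < n`. -/
structure FPath {V Edg : Type*} (G : DGraph V Edg) (H : Set V) where
  edges : List Edg
  ne : edges ≠ []
  chain : G.IsChain edges
  src_not_mem : G.s (edges.head ne) ∉ H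
  rng_mem : G.r (edges.getLast ne) ∈ H
  mid_not_mem : ∀ e ∈ edges.dropLast, G.r e ∉ H

/-- The graph `_HE`: its vertices are `H ∪ F_E(H)` (realized inside `V ⊕ FPath G H`)
and its edges are `{e ∈ E¹ : s(e) ∈ H} ∪ {ᾱ : α ∈ F_E(H)}`, where `ᾱ` has source `α`
and range `r(α)`, and edges with source in `H` keep their source and range from `E`. -/
def HEGraph {V Edg : Type*} (G : DGraph V Edg) (H : Set V) :
    DGraph (V ⊕ FPath G H) ({e : Edg // G.s e ∈ H} ⊕ FPath G H) where
  s := fun f => match f with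
    | Sum.inl e => Sum.inl (G.s e.1)
    | Sum.inr α => Sum.inr α
  r := fun f => match f with
    | Sum.inl e => Sum.inl (G.r e.1)
    | Sum.inr α => Sum.inl (G.r (α.edges.getLast α.ne))

/-- The underlying `E`-edge of an edge of `_HE` (for an edge `ᾱ` we return a dummy,
the last edge of `α`; closed paths of `_HE` never use such edges). -/
def toE {V Edg : Type*} (G : DGraph V Edg) (H : Set V) :
    ({e : Edg // G.s e ∈ H} ⊕ FPath G H) → Edg
  | Sum.inl e => e.1
  | Sum.inr α => α.edges.getLast α.ne

/-- for hereditary `H`, no vertex of `F_E(H)` is the range of any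
edge of `_HE`; consequently every closed path of `_HE` consists entirely of edges
of `E` with source in `H`, and the closed paths of `_HE` are exactly the closed
paths of `E` all of whose vertices lie in `H`. -/
theorem stmt18 {V Edg : Type*} (G : DGraph V Edg) (H : Set V) (hH : G.Hereditary H) :
    (∀ (f : {e : Edg // G.s e ∈ H} ⊕ FPath G H) (α : FPath G H),
      (HEGraph G H).r f ≠ Sum.inr α) ∧
    (∀ p : List ({e : Edg // G.s e ∈ H} ⊕ FPath G H), (HEGraph G H).IsClosedPath p →
      ∀ f ∈ p, ∃ e : {e : Edg // G.s e ∈ H}, f = Sum.inl e) ∧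
    (∀ q : List Edg,
      (G.IsClosedPath q ∧ ∀ e ∈ q, G.s e ∈ H) ↔
      (∃ p : List ({e : Edg // G.s e ∈ H} ⊕ FPath G H),
        (HEGraph G H).IsClosedPath p ∧ p.map (toE G H) = q)) := by

  classical
  have hr_inl : ∀ f : {e : Edg // G.s e ∈ H} ⊕ FPath G H,
      ∃ u, (HEGraph G H).r f = Sum.inl u := by
    rintro (e | α) <;> exact ⟨_, rfl⟩
  have h1 : ∀ (f : {e : Edg // G.s e ∈ H} ⊕ FPath G H) (α : FPath G H),
      (HEGraph G H).r f ≠ Sum.inr α := by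
    intro f α h
    obtain ⟨u, hu⟩ := hr_inl f
    rw [hu] at h
    exact Sum.inl_ne_inr h
  have h2 : ∀ p : List ({e : Edg // G.s e ∈ H} ⊕ FPath G H),
      (HEGraph G H).IsClosedPath p →
      ∀ f ∈ p, ∃ e : {e : Edg // G.s e ∈ H}, f = Sum.inl e := by
    rintro p ⟨w, hne, hchain, hhead, hlast⟩ f hf
    have hs : ∃ u, (HEGraph G H).s f = Sum.inl u := by
      obtain ⟨n, hn⟩ := List.mem_iff_get.mp hf
      obtain ⟨i, hi⟩ := n
      match i, hi with
      | 0, hi =>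
        have : p.get ⟨0, hi⟩ = p.head hne := by
          cases p with
          | nil => exact absurd rfl hne
          | cons a l => rfl
        rw [this] at hn
        subst hn
        rw [hhead, ← hlast]
        exact hr_inl _
      | (j+1), hi =>
        have hj : j < p.length - 1 := by omega
        have := List.isChain_iff_getElem.mp hchain j (by omega)
        subst hn
        rw [List.get_eq_getElem, ← this]
        exact hr_inl _
    obtain ⟨u, hu⟩ := hs
    cases f with
    | inl e => exact ⟨e, rfl⟩
    | inr α => exact absurd hu (by simp [HEGraph])
  refine ⟨h1, h2, ?_⟩
  intro q
  constructor
  · rintro ⟨⟨v, hne, hchain, hhead, hlast⟩, hq⟩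
    refine ⟨q.attach.map (fun e => Sum.inl ⟨e.1, hq e.1 e.2⟩), ⟨Sum.inl v, ?_, ?_, ?_, ?_⟩, ?_⟩
    · simp [hne]
    · rw [DGraph.IsChain, List.Chain', List.isChain_map]
      have : q.attach.map Subtype.val = q := List.attach_map_subtype_val q
      have hc : List.Chain' (fun a b : {x // x ∈ q} => G.r a.1 = G.s b.1) q.attach :=
        (List.isChain_map (R := fun e f => G.r e = G.s f) (Subtype.val : {x // x ∈ q} → Edg)).mp (by rw [this]; exact hchain)
      refine hc.imp ?_
      intro a b hab
      simpa [HEGraph] using hab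
    · rw [List.head_map, List.head_attach]
      simp [HEGraph, hhead]
    · rw [List.getLast_map, List.getLast_attach]
      simp [HEGraph, hlast]
    · rw [List.map_map]
      have : (toE G H ∘ fun e : {x // x ∈ q} => Sum.inl ⟨e.1, hq e.1 e.2⟩)
          = Subtype.val := by funext e; rfl
      rw [this, List.attach_map_subtype_val]
  · rintro ⟨p, hp, rfl⟩
    obtain ⟨w, hne, hchain, hhead, hlast⟩ := hp
    have hall := h2 p ⟨w, hne, hchain, hhead, hlast⟩
    obtain ⟨v, hw⟩ : ∃ v, w = Sum.inl v := by
      obtain ⟨u, hu⟩ := hr_inl (p.getLast hne)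
      exact ⟨u, by rw [← hlast, hu]⟩
    subst hw
    have hmapne : p.map (toE G H) ≠ [] := by simp [hne]
    constructor
    · refine ⟨v, hmapne, ?_, ?_, ?_⟩
      · rw [DGraph.IsChain, List.Chain', List.isChain_map]
        refine hchain.imp ?_
        rintro (a | α) (b | β) hab
        · simpa [HEGraph, toE] using hab
        · exact absurd hab (by simp [HEGraph])
        · simpa [HEGraph, toE] using hab
        · exact absurd hab (by simp [HEGraph])
      · rw [List.head_map]
        obtain ⟨e, he⟩ := hall (p.head hne) (List.head_mem hne)
        rw [he] at hhead ⊢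
        simpa [HEGraph, toE] using hhead
      · rw [List.getLast_map]
        obtain ⟨e, he⟩ := hall (p.getLast hne) (List.getLast_mem hne)
        rw [he] at hlast ⊢
        simpa [HEGraph, toE] using hlast
    · intro e he
      obtain ⟨f, hf, hfe⟩ := List.mem_map.mp he
      obtain ⟨e', rfl⟩ := hall f hf
      have : toE G H (Sum.inl e') = e'.1 := rfl
      rw [this] at hfe
      rw [← hfe]
      exact e'.2
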